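/- Let γ > 1, K > 0, T ∈ (0,∞], and let c, b : [0,T) → ℝ be twice continuously differentiable and W : [0,T) → ℝ continuously differentiable. Define R(x,t) = W(t) − ((γ−1)/(Kγ))[b'(t) + b(t)c(t)] x − ((γ−1)/(2Kγ))[c'(t) + c(t)²] x². Then the transported mass balance ∂_t R(x,t) + (c(t)x + b(t)) ∂_x R(x,t) + (γ−1) c(t) R(x,t) = 0 holds for all x ∈ ℝ and all t ∈ [0,T) if and only if the following three functional differential equations hold for all t ∈ [0,T): (1) W'(t) + (γ−1)c(t)W(t) − ((γ−1)/(Kγ)) b(t)[b'(t) + b(t)c(t)] = 0; (2) (d/dt)[b'(t) + b(t)c(t)] + γ c(t)[b'(t) + b(t)c(t)] + b(t)[c'(t) + c(t)²] = 0; (3) (d/dt)[c'(t) + c(t)²] + (γ+1)[c'(t) + c(t)²] c(t) = 0. -/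

import Mathlib

open Real Set Filter Topology
open scoped ENNReal

private lemma quad_coeffs_zero (p q r : ℝ) (h : ∀ x : ℝ, p + q * x + r * x ^ 2 = 0) :
    p = 0 ∧ q = 0 ∧ r = 0 := by
  have h0 := h 0
  have h1 := h 1
  have hm := h (-1)
  norm_num at h0 h1 hm
  refine ⟨h0, by linarith, by linarith⟩

theorem mass_balance_iff_functional_ODEs
    (γ K : ℝ) (hγ : 1 < γ) (hK : 0 < K)
    (T : ℝ≥0∞) (hT : 0 < T)
    (D : Set ℝ) (hD : D = {t : ℝ | 0 ≤ t ∧ ENNReal.ofReal t < T})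
    (c c' c'' b b' b'' W W' : ℝ → ℝ)
    (hc : ∀ t ∈ D, HasDerivAt c (c' t) t)
    (hc' : ∀ t ∈ D, HasDerivAt c' (c'' t) t)
    (hc''c : ContinuousOn c'' D)
    (hb : ∀ t ∈ D, HasDerivAt b (b' t) t)
    (hb' : ∀ t ∈ D, HasDerivAt b' (b'' t) t)
    (hb''c : ContinuousOn b'' D)
    (hW : ∀ t ∈ D, HasDerivAt W (W' t) t)
    (hW'c : ContinuousOn W' D)
    (R : ℝ → ℝ → ℝ)
    (hR : R = fun x t => W t - ((γ - 1) / (K * γ)) * (b' t + b t * c t) * x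
        - ((γ - 1) / (2 * K * γ)) * (c' t + c t ^ 2) * x ^ 2) :
    (∀ x : ℝ, ∀ t ∈ D,
        deriv (fun τ => R x τ) t + (c t * x + b t) * deriv (fun y => R y t) x
          + (γ - 1) * c t * R x t = 0)
    ↔ ((∀ t ∈ D, W' t + (γ - 1) * c t * W t
          - ((γ - 1) / (K * γ)) * b t * (b' t + b t * c t) = 0) ∧
       (∀ t ∈ D, deriv (fun τ => b' τ + b τ * c τ) t
          + γ * c t * (b' t + b t * c t) + b t * (c' t + c t ^ 2) = 0) ∧
       (∀ t ∈ D, deriv (fun τ => c' τ + c τ ^ 2) t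
          + (γ + 1) * (c' t + c t ^ 2) * c t = 0)) := by
  have hγ1 : γ - 1 ≠ 0 := by linarith
  have hKγ : K * γ ≠ 0 := by positivity
  set A : ℝ := (γ - 1) / (K * γ) with hAdef
  have hA0 : A ≠ 0 := div_ne_zero hγ1 hKγ
  have hCA : (γ - 1) / (2 * K * γ) = A / 2 := by
    rw [hAdef, div_div]; ring_nf
  rw [hCA] at hR
  -- derivatives of the auxiliary combinations
  have hBd : ∀ t ∈ D, HasDerivAt (fun τ => b' τ + b τ * c τ)
      (b'' t + (b' t * c t + b t * c' t)) t :=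
    fun t ht => (hb' t ht).add ((hb t ht).mul (hc t ht))
  have hEd : ∀ t ∈ D, HasDerivAt (fun τ => c' τ + c τ ^ 2)
      (c'' t + 2 * c t * c' t) t := by
    intro t ht
    have h2 := (hc t ht).pow 2
    simpa [mul_comm, mul_assoc, mul_left_comm, Pi.add_def, Pi.pow_def] using (hc' t ht).add h2
  -- time derivative of R
  have hdT : ∀ (x : ℝ), ∀ t ∈ D, deriv (fun τ => R x τ) t
      = W' t - A * (b'' t + (b' t * c t + b t * c' t)) * x
        - A / 2 * (c'' t + 2 * c t * c' t) * x ^ 2 := by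
    intro x t ht
    subst hR
    exact (((hW t ht).sub (((hBd t ht).const_mul A).mul_const x)).sub
      (((hEd t ht).const_mul (A / 2)).mul_const (x ^ 2))).deriv
  -- space derivative of R
  have hdX : ∀ (x : ℝ), ∀ t ∈ D, deriv (fun y => R y t) x
      = -(A * (b' t + b t * c t)) - A / 2 * (c' t + c t ^ 2) * (2 * x) := by
    intro x t ht
    subst hR
    have h1 : HasDerivAt (fun y : ℝ => A * (b' t + b t * c t) * y)
        (A * (b' t + b t * c t)) x := by
      simpa using (hasDerivAt_id x).const_mul (A * (b' t + b t * c t))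
    have h2 : HasDerivAt (fun y : ℝ => A / 2 * (c' t + c t ^ 2) * y ^ 2)
        (A / 2 * (c' t + c t ^ 2) * (2 * x)) x := by
      have h := (hasDerivAt_pow 2 x).const_mul (A / 2 * (c' t + c t ^ 2))
      norm_num at h
      exact h
    have := ((hasDerivAt_const x (W t)).sub h1).sub h2
    simpa [Pi.sub_def] using this.deriv
  constructor
  · intro H
    have key : ∀ t ∈ D,
        (W' t + (γ - 1) * c t * W t - A * b t * (b' t + b t * c t)) = 0 ∧
        (-(A * ((b'' t + (b' t * c t + b t * c' t)) + γ * c t * (b' t + b t * c t)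
            + b t * (c' t + c t ^ 2)))) = 0 ∧
        (-(A / 2 * ((c'' t + 2 * c t * c' t) + (γ + 1) * (c' t + c t ^ 2) * c t))) = 0 := by
      intro t ht
      apply quad_coeffs_zero
      intro x
      have hx := H x t ht
      rw [hdT x t ht, hdX x t ht, hR] at hx
      linear_combination hx
    refine ⟨fun t ht => (key t ht).1, fun t ht => ?_, fun t ht => ?_⟩
    · rw [(hBd t ht).deriv]
      have h2 := (key t ht).2.1
      rw [neg_eq_zero] at h2
      rcases mul_eq_zero.mp h2 with h | h
      · exact absurd h hA0
      · linarith
    · rw [(hEd t ht).deriv]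
      have h3 := (key t ht).2.2
      rw [neg_eq_zero] at h3
      rcases mul_eq_zero.mp h3 with h | h
      · exact absurd h (div_ne_zero hA0 two_ne_zero)
      · linarith
  · rintro ⟨h1, h2, h3⟩ x t ht
    have e1 := h1 t ht
    have e2 := h2 t ht
    have e3 := h3 t ht
    rw [(hBd t ht).deriv] at e2
    rw [(hEd t ht).deriv] at e3
    rw [hdT x t ht, hdX x t ht, hR]
    linear_combination e1 - A * x * e2 - A / 2 * x ^ 2 * e3
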